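/- Let a ∈ W^{1,∞}(0,1) satisfy the strong degeneracy hypothesis: a(x₀)=0 for x₀ ∈ (0,1), a > 0 on [0,1]\{x₀}, (x-x₀)a' ≤ K a a.e. with K ∈ [1,2). Then there exists C > 0 such that for every v ∈ H¹₀(0,1) with ∫₀¹ v²/a dx < ∞, one has ∫₀¹ v²(x)/a(x) dx ≤ C ∫₀¹ v'(x)² dx. -/

import Mathlib

open MeasureTheory Set Filter Topology
open scoped Interval

lemma monotone_ftc_le {f : ℝ → ℝ} (hf : Monotone f) (hc : Continuous f) {p q : ℝ} (hpq : p ≤ q) :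
    ∫ x in Ioc p q, deriv f x ≤ f q - f p := by
  set μ := hf.stieltjesFunction.measure with hμ
  have hs : ∀ x, hf.stieltjesFunction x = f x := by
    intro x
    exact rightLim_eq_of_tendsto (h := nhdsGT_neBot x)
      ((hc.tendsto x).mono_left nhdsWithin_le_nhds)
  have derivEq : ∀ᵐ x, deriv f x = (μ.rnDeriv volume x).toReal :=
    hf.ae_hasDerivAt.mono fun x hx => hx.deriv
  have h1 : ∫ x in Ioc p q, deriv f x = ∫ x in Ioc p q, (μ.rnDeriv volume x).toReal :=
    integral_congr_ae (ae_restrict_of_ae derivEq)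
  have h2 : ∫ x in Ioc p q, (μ.rnDeriv volume x).toReal
      = (∫⁻ x in Ioc p q, μ.rnDeriv volume x).toReal :=
    integral_toReal (μ.measurable_rnDeriv volume).aemeasurable
      (ae_restrict_of_ae (μ.rnDeriv_lt_top volume))
  have h3 : (∫⁻ x in Ioc p q, μ.rnDeriv volume x) ≤ μ (Ioc p q) := by
    have := Measure.withDensity_rnDeriv_le μ volume
    have h := this (Ioc p q)
    rwa [withDensity_apply _ measurableSet_Ioc] at h
  have hfin : μ (Ioc p q) ≠ ⊤ := by
    rw [hμ, StieltjesFunction.measure_Ioc]; exact ENNReal.ofReal_ne_top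
  have h4 : (μ (Ioc p q)).toReal = f q - f p := by
    rw [hμ, StieltjesFunction.measure_Ioc, hs, hs,
      ENNReal.toReal_ofReal (sub_nonneg.2 (hf hpq))]
  rw [h1, h2, ← h4]
  exact ENNReal.toReal_mono hfin h3

lemma lip_abs_le {f : ℝ → ℝ} {L : NNReal} (hf : LipschitzWith L f) {x d : ℝ}
    (h : HasDerivAt f d x) : |d| ≤ L := by
  have h1 : Tendsto (slope f x) (𝓝[≠] x) (𝓝 d) := hasDerivAt_iff_tendsto_slope.1 h
  have h2 : Tendsto (fun y => |slope f x y|) (𝓝[≠] x) (𝓝 |d|) :=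
    (continuous_abs.tendsto d).comp h1
  refine le_of_tendsto h2 ?_
  filter_upwards [self_mem_nhdsWithin] with y hy
  have hxy : (y : ℝ) ≠ x := hy
  have hd := hf.dist_le_mul y x
  rw [Real.dist_eq, Real.dist_eq] at hd
  rw [slope_def_field, div_eq_mul_inv, abs_mul, abs_inv]
  calc |f y - f x| * |y - x|⁻¹ ≤ (L * |y - x|) * |y - x|⁻¹ := by
        apply mul_le_mul_of_nonneg_right hd (by positivity)
    _ = L := by
        rw [mul_assoc, mul_inv_cancel₀ (by simpa [sub_eq_zero] using hxy), mul_one]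

lemma lip_deriv_abs_le {f : ℝ → ℝ} {L : NNReal} (hf : LipschitzWith L f) (x : ℝ) :
    |deriv f x| ≤ L := by
  by_cases hd : DifferentiableAt ℝ f x
  · exact lip_abs_le hf hd.hasDerivAt
  · rw [deriv_zero_of_not_differentiableAt hd]; simp

lemma lip_deriv_integrableOn {f : ℝ → ℝ} {L : NNReal} (hf : LipschitzWith L f) {s : Set ℝ}
    (hs : MeasurableSet s) (hfin : volume s ≠ ⊤) : IntegrableOn (deriv f) s := by
  refine Integrable.mono' (g := fun _ => (L:ℝ)) ?_ ?_ ?_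
  · exact integrableOn_const hfin
  · exact (measurable_deriv f).aestronglyMeasurable.restrict
  · exact Eventually.of_forall fun x => by
      simpa [Real.norm_eq_abs] using lip_deriv_abs_le hf x

lemma lipschitz_ftc {f : ℝ → ℝ} {L : NNReal} (hf : LipschitzWith L f) {p q : ℝ} (hpq : p ≤ q) :
    f q - f p = ∫ x in Ioc p q, deriv f x := by
  set c : ℝ := (L : ℝ) + 1 with hc
  have hLc : (L : ℝ) ≤ c := by simp [hc]
  have hkey : ∀ x y : ℝ, x ≤ y → |f x - f y| ≤ L * (y - x) := by
    intro x y hxy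
    have hd := hf.dist_le_mul x y
    rwa [Real.dist_eq, Real.dist_eq, abs_sub_comm x y, abs_of_nonneg (sub_nonneg.2 hxy)] at hd
  have hfin : volume (Ioc p q) ≠ ⊤ := by simp [Real.volume_Ioc]
  have hint : IntegrableOn (deriv f) (Ioc p q) := lip_deriv_integrableOn hf measurableSet_Ioc hfin
  have hdiff : ∀ᵐ x : ℝ, DifferentiableAt ℝ f x := hf.ae_differentiableAt
  have hvol : (volume (Ioc p q)).toReal = q - p := by
    rw [Real.volume_Ioc, ENNReal.toReal_ofReal (by linarith)]
  -- g₁ = f + c x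
  have hg1m : Monotone (fun x => f x + c * x) := by
    intro x y hxy
    have := hkey x y hxy
    have h2 : f x - f y ≤ L * (y - x) := (abs_le.1 this).2
    have : (L : ℝ) * (y - x) ≤ c * (y - x) := by
      apply mul_le_mul_of_nonneg_right hLc (by linarith)
    simp only []
    nlinarith
  have hg2m : Monotone (fun x => c * x - f x) := by
    intro x y hxy
    have := hkey x y hxy
    have h2 : -(L * (y - x)) ≤ f x - f y := (abs_le.1 this).1
    have : (L : ℝ) * (y - x) ≤ c * (y - x) := by
      apply mul_le_mul_of_nonneg_right hLc (by linarith)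
    simp only []
    nlinarith
  have hg1d : ∀ᵐ x : ℝ, deriv (fun x => f x + c * x) x = deriv f x + c := by
    filter_upwards [hdiff] with x hx
    have : HasDerivAt (fun x => f x + c * x) (deriv f x + c * 1) x :=
      hx.hasDerivAt.add ((hasDerivAt_id x).const_mul c)
    simpa using this.deriv
  have hg2d : ∀ᵐ x : ℝ, deriv (fun x => c * x - f x) x = c - deriv f x := by
    filter_upwards [hdiff] with x hx
    have : HasDerivAt (fun x => c * x - f x) (c * 1 - deriv f x) x :=
      ((hasDerivAt_id x).const_mul c).sub hx.hasDerivAt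
    simpa using this.deriv
  have hconst : IntegrableOn (fun _ : ℝ => c) (Ioc p q) := integrable_const c
  have e1 : ∫ x in Ioc p q, deriv (fun x => f x + c * x) x = (∫ x in Ioc p q, deriv f x) + c * (q - p) := by
    rw [integral_congr_ae (ae_restrict_of_ae hg1d), integral_add hint hconst,
      setIntegral_const, measureReal_def, hvol, smul_eq_mul]
    ring
  have e2 : ∫ x in Ioc p q, deriv (fun x => c * x - f x) x = c * (q - p) - ∫ x in Ioc p q, deriv f x := by
    rw [integral_congr_ae (ae_restrict_of_ae hg2d), integral_sub hconst hint,
      setIntegral_const, measureReal_def, hvol, smul_eq_mul]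
    ring
  have b1 := monotone_ftc_le hg1m (hf.continuous.add (continuous_const.mul continuous_id)) hpq
  have b2 := monotone_ftc_le hg2m ((continuous_const.mul continuous_id).sub hf.continuous) hpq
  rw [e1] at b1
  rw [e2] at b2
  have b1' : (∫ x in Ioc p q, deriv f x) + c * (q - p) ≤ (f q + c * q) - (f p + c * p) := b1
  have b2' : c * (q - p) - (∫ x in Ioc p q, deriv f x) ≤ (c * q - f q) - (c * p - f p) := b2
  linarith

lemma abs_log_sub_log_le {m a b : ℝ} (hm : 0 < m) (ha : m ≤ a) (hb : m ≤ b) :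
    |Real.log a - Real.log b| ≤ |a - b| / m := by
  wlog h : b ≤ a generalizing a b
  · rw [abs_sub_comm, abs_sub_comm a b]; exact this hb ha (by linarith)
  have ha0 : 0 < a := lt_of_lt_of_le hm ha
  have hb0 : 0 < b := lt_of_lt_of_le hm hb
  rw [abs_of_nonneg (sub_nonneg.2 ((Real.log_le_log_iff hb0 ha0).2 h)),
    abs_of_nonneg (sub_nonneg.2 h), ← Real.log_div ha0.ne' hb0.ne']
  have h1 : Real.log (a / b) ≤ a / b - 1 := Real.log_le_sub_one_of_pos (by positivity)
  have h2 : a / b - 1 = (a - b) / b := by field_simp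
  have h3 : (a - b) / b ≤ (a - b) / m := div_le_div_of_nonneg_left (by linarith) hm hb
  linarith

/-- Lipschitz of `log ∘ A` on a set where `A ≥ m > 0`. -/
lemma log_comp_lipschitzOnWith {A : ℝ → ℝ} {LA : NNReal} (hA : LipschitzWith LA A)
    {s : Set ℝ} {m : ℝ} (hm : 0 < m) (hge : ∀ y ∈ s, m ≤ A y) :
    LipschitzOnWith (Real.toNNReal ((LA : ℝ) / m)) (fun y => Real.log (A y)) s := by
  rw [lipschitzOnWith_iff_dist_le_mul]
  intro u hu v hv
  rw [Real.dist_eq, Real.dist_eq]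
  have h1 : |Real.log (A u) - Real.log (A v)| ≤ |A u - A v| / m :=
    abs_log_sub_log_le hm (hge u hu) (hge v hv)
  have h2 : |A u - A v| ≤ (LA : ℝ) * |u - v| := by
    have := hA.dist_le_mul u v
    rwa [Real.dist_eq, Real.dist_eq] at this
  have h3 : |A u - A v| / m ≤ ((LA : ℝ) * |u - v|) / m := by gcongr
  calc |Real.log (A u) - Real.log (A v)| ≤ ((LA : ℝ) * |u - v|) / m := le_trans h1 h3
    _ = ((LA : ℝ) / m) * |u - v| := by ring
    _ = (Real.toNNReal ((LA : ℝ) / m) : ℝ) * |u - v| := by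
        rw [Real.coe_toNNReal _ (by positivity)]

lemma aux_right {A : ℝ → ℝ} {LA : NNReal} (hA : LipschitzWith LA A)
    {x₀ K : ℝ} (hx₀0 : 0 < x₀) (hx₀1 : x₀ < 1)
    (hpos : ∀ y ∈ Icc (0:ℝ) 1, y ≠ x₀ → 0 < A y)
    (hae : ∀ᵐ y : ℝ, y ∈ Ioo x₀ (1:ℝ) → (y - x₀) * deriv A y ≤ K * A y)
    {x : ℝ} (hx : x₀ < x) (hx1 : x ≤ 1) :
    A 1 / (1 - x₀) ^ K * (x - x₀) ^ K ≤ A x := by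
  have hApos : ∀ y ∈ Icc x 1, 0 < A y := fun y hy =>
    hpos y ⟨by linarith [hy.1], hy.2⟩ (by intro h; rw [h] at hy; linarith [hy.1])
  obtain ⟨z, hz, hzm⟩ := isCompact_Icc.exists_isMinOn (nonempty_Icc.2 hx1)
    hA.continuous.continuousOn
  set m := A z with hmdef
  have hm : 0 < m := hApos z hz
  have hge : ∀ y ∈ Icc x 1, m ≤ A y := fun y hy => isMinOn_iff.1 hzm y hy
  obtain ⟨ψ, hψl, hψe⟩ := (log_comp_lipschitzOnWith hA hm hge).extend_real
  have hftc : ψ 1 - ψ x = ∫ y in Ioc x 1, deriv ψ y := lipschitz_ftc hψl hx1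
  -- a.e. bound on deriv ψ
  have h1ae : ∀ᵐ y : ℝ, y ≠ (1:ℝ) := by
    have : {y : ℝ | ¬ y ≠ 1} = {1} := by ext t; simp
    rw [ae_iff, this]; exact measure_singleton 1
  have hb : ∀ᵐ y ∂(volume.restrict (Ioc x 1)), deriv ψ y ≤ K * (y - x₀)⁻¹ := by
    filter_upwards [ae_restrict_mem measurableSet_Ioc, ae_restrict_of_ae hae,
      ae_restrict_of_ae hA.ae_differentiableAt, ae_restrict_of_ae h1ae] with y hy hiq hdA hne1
    have hy1 : y < 1 := lt_of_le_of_ne hy.2 hne1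
    have hyo : y ∈ Ioo x₀ 1 := ⟨lt_trans hx hy.1, hy1⟩
    have hApos' : 0 < A y := hApos y ⟨hy.1.le, hy.2⟩
    have hder : HasDerivAt ψ ((A y)⁻¹ * deriv A y) y := by
      have hlog : HasDerivAt (fun t => Real.log (A t)) ((A y)⁻¹ * deriv A y) y :=
        (Real.hasDerivAt_log hApos'.ne').comp y hdA.hasDerivAt
      apply hlog.congr_of_eventuallyEq
      filter_upwards [isOpen_Ioo.mem_nhds (⟨hy.1, hy1⟩ : y ∈ Ioo x 1)] with t ht
      exact (hψe ⟨ht.1.le, ht.2.le⟩).symm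
    rw [hder.deriv]
    have hyx₀ : 0 < y - x₀ := by linarith [hyo.1]
    have hq : deriv A y / A y ≤ K / (y - x₀) := by
      rw [div_le_div_iff₀ hApos' hyx₀, mul_comm]
      exact hiq hyo
    calc (A y)⁻¹ * deriv A y = deriv A y / A y := by rw [div_eq_mul_inv, mul_comm]
      _ ≤ K / (y - x₀) := hq
      _ = K * (y - x₀)⁻¹ := by rw [div_eq_mul_inv]
  have hgint : IntegrableOn (fun y => K * (y - x₀)⁻¹) (Ioc x 1) := by
    apply (ContinuousOn.integrableOn_compact isCompact_Icc ?_).mono_set Ioc_subset_Icc_self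
    refine continuousOn_const.mul (ContinuousOn.inv₀
      ((continuous_id.sub continuous_const).continuousOn) ?_)
    intro y hy
    have h0 : (0:ℝ) < y - x₀ := by have := hy.1; linarith
    exact h0.ne'
  have hmono : ∫ y in Ioc x 1, deriv ψ y ≤ ∫ y in Ioc x 1, K * (y - x₀)⁻¹ :=
    integral_mono_ae (lip_deriv_integrableOn hψl measurableSet_Ioc (by simp [Real.volume_Ioc]))
      hgint hb
  have hcalc : ∫ y in Ioc x 1, K * (y - x₀)⁻¹
      = K * Real.log (1 - x₀) - K * Real.log (x - x₀) := by
    rw [← intervalIntegral.integral_of_le hx1]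
    have hF : ∀ y ∈ uIcc x 1, HasDerivAt (fun t => K * Real.log (t - x₀)) (K * (y - x₀)⁻¹) y := by
      intro y hy
      rw [uIcc_of_le hx1] at hy
      have hy0 : (0:ℝ) < y - x₀ := by linarith [hy.1]
      have h1 : HasDerivAt (fun t => t - x₀) 1 y := (hasDerivAt_id y).sub_const x₀
      have h2 : HasDerivAt (fun t => Real.log (t - x₀)) ((y - x₀)⁻¹ * 1) y :=
        (Real.hasDerivAt_log hy0.ne').comp (h := fun t => t - x₀) y h1
      simpa using h2.const_mul K
    rw [intervalIntegral.integral_eq_sub_of_hasDerivAt hF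
      ((intervalIntegrable_iff_integrableOn_Ioc_of_le hx1).2 hgint)]
  have hψ1 : ψ 1 = Real.log (A 1) := (hψe ⟨hx1, le_refl 1⟩).symm
  have hψx : ψ x = Real.log (A x) := (hψe ⟨le_refl x, hx1⟩).symm
  have hchain : Real.log (A 1) - Real.log (A x)
      ≤ K * Real.log (1 - x₀) - K * Real.log (x - x₀) := by
    rw [← hψ1, ← hψx, hftc]
    exact le_trans hmono (le_of_eq hcalc)
  have h10 : (0:ℝ) < 1 - x₀ := by linarith
  have h20 : (0:ℝ) < x - x₀ := by linarith
  have hA1 : 0 < A 1 := hpos 1 ⟨by linarith, le_refl 1⟩ (by intro h; rw [← h] at hx₀1; linarith)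
  have hAx : 0 < A x := hApos x ⟨le_refl x, hx1⟩
  have hR : 0 < A 1 / (1 - x₀) ^ K * (x - x₀) ^ K := by positivity
  rw [← Real.log_le_log_iff hR hAx]
  rw [Real.log_mul (by positivity) (by positivity),
    Real.log_div hA1.ne' (by positivity), Real.log_rpow h10, Real.log_rpow h20]
  linarith

lemma aux_left {A : ℝ → ℝ} {LA : NNReal} (hA : LipschitzWith LA A)
    {x₀ K : ℝ} (hx₀0 : 0 < x₀) (hx₀1 : x₀ < 1)
    (hpos : ∀ y ∈ Icc (0:ℝ) 1, y ≠ x₀ → 0 < A y)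
    (hae : ∀ᵐ y : ℝ, y ∈ Ioo (0:ℝ) x₀ → (y - x₀) * deriv A y ≤ K * A y)
    {x : ℝ} (hx0 : 0 ≤ x) (hx : x < x₀) :
    A 0 / x₀ ^ K * (x₀ - x) ^ K ≤ A x := by
  have hApos : ∀ y ∈ Icc (0:ℝ) x, 0 < A y := fun y hy =>
    hpos y ⟨hy.1, by linarith [hy.2]⟩ (by intro h; rw [h] at hy; linarith [hy.2])
  obtain ⟨z, hz, hzm⟩ := isCompact_Icc.exists_isMinOn (nonempty_Icc.2 hx0)
    hA.continuous.continuousOn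
  set m := A z with hmdef
  have hm : 0 < m := hApos z hz
  have hge : ∀ y ∈ Icc (0:ℝ) x, m ≤ A y := fun y hy => isMinOn_iff.1 hzm y hy
  obtain ⟨ψ, hψl, hψe⟩ := (log_comp_lipschitzOnWith hA hm hge).extend_real
  have hftc : ψ x - ψ 0 = ∫ y in Ioc 0 x, deriv ψ y := lipschitz_ftc hψl hx0
  have h1ae : ∀ᵐ y : ℝ, y ≠ x := by
    have : {y : ℝ | ¬ y ≠ x} = {x} := by ext t; simp
    rw [ae_iff, this]; exact measure_singleton x
  have hb : ∀ᵐ y ∂(volume.restrict (Ioc 0 x)), K * (y - x₀)⁻¹ ≤ deriv ψ y := by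
    filter_upwards [ae_restrict_mem measurableSet_Ioc, ae_restrict_of_ae hae,
      ae_restrict_of_ae hA.ae_differentiableAt, ae_restrict_of_ae h1ae] with y hy hiq hdA hnex
    have hyx : y < x := lt_of_le_of_ne hy.2 hnex
    have hyo : y ∈ Ioo (0:ℝ) x₀ := ⟨hy.1, by linarith⟩
    have hApos' : 0 < A y := hApos y ⟨hy.1.le, hy.2⟩
    have hder : HasDerivAt ψ ((A y)⁻¹ * deriv A y) y := by
      have hlog : HasDerivAt (fun t => Real.log (A t)) ((A y)⁻¹ * deriv A y) y :=
        (Real.hasDerivAt_log hApos'.ne').comp y hdA.hasDerivAt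
      apply hlog.congr_of_eventuallyEq
      filter_upwards [isOpen_Ioo.mem_nhds (⟨hy.1, hyx⟩ : y ∈ Ioo 0 x)] with t ht
      exact (hψe ⟨ht.1.le, ht.2.le⟩).symm
    rw [hder.deriv]
    have hu : (0:ℝ) < x₀ - y := by linarith [hyo.2]
    have key : (-(deriv A y)) / A y ≤ K / (x₀ - y) := by
      rw [div_le_div_iff₀ hApos' hu]
      have h' : (y - x₀) * deriv A y ≤ K * A y := hiq hyo
      nlinarith [h']
    have e1 : (y - x₀)⁻¹ = -((x₀ - y)⁻¹) := by
      rw [show y - x₀ = -(x₀ - y) by ring, inv_neg]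
    calc K * (y - x₀)⁻¹ = -(K / (x₀ - y)) := by rw [e1]; ring
      _ ≤ -((-(deriv A y)) / A y) := neg_le_neg key
      _ = deriv A y / A y := by ring
      _ = (A y)⁻¹ * deriv A y := by rw [div_eq_mul_inv, mul_comm]
  have hgint : IntegrableOn (fun y => K * (y - x₀)⁻¹) (Ioc 0 x) := by
    apply (ContinuousOn.integrableOn_compact isCompact_Icc ?_).mono_set Ioc_subset_Icc_self
    refine continuousOn_const.mul (ContinuousOn.inv₀
      ((continuous_id.sub continuous_const).continuousOn) ?_)
    intro y hy
    have h0 : y - x₀ < 0 := by have := hy.2; linarith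
    exact h0.ne
  have hmono : ∫ y in Ioc 0 x, K * (y - x₀)⁻¹ ≤ ∫ y in Ioc 0 x, deriv ψ y :=
    integral_mono_ae hgint
      (lip_deriv_integrableOn hψl measurableSet_Ioc (by simp [Real.volume_Ioc])) hb
  have hcalc : ∫ y in Ioc 0 x, K * (y - x₀)⁻¹
      = K * Real.log (x₀ - x) - K * Real.log x₀ := by
    rw [← intervalIntegral.integral_of_le hx0]
    have hF : ∀ y ∈ uIcc 0 x, HasDerivAt (fun t => K * Real.log (x₀ - t)) (K * (y - x₀)⁻¹) y := by
      intro y hy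
      rw [uIcc_of_le hx0] at hy
      have hy0 : (0:ℝ) < x₀ - y := by linarith [hy.2]
      have h1 : HasDerivAt (fun t : ℝ => x₀ - t) (-1) y := by
        simpa using (hasDerivAt_id y).const_sub x₀
      have h2 : HasDerivAt (fun t => Real.log (x₀ - t)) ((x₀ - y)⁻¹ * (-1)) y :=
        (Real.hasDerivAt_log hy0.ne').comp y h1
      have e : K * ((x₀ - y)⁻¹ * (-1)) = K * (y - x₀)⁻¹ := by
        rw [show y - x₀ = -(x₀ - y) by ring, inv_neg]; ring
      have h3 := h2.const_mul K
      rwa [e] at h3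
    rw [intervalIntegral.integral_eq_sub_of_hasDerivAt hF
      ((intervalIntegrable_iff_integrableOn_Ioc_of_le hx0).2 hgint)]
    simp
  have hψx : ψ x = Real.log (A x) := (hψe ⟨hx0, le_refl x⟩).symm
  have hψ0 : ψ 0 = Real.log (A 0) := (hψe ⟨le_refl 0, hx0⟩).symm
  have hchain : K * Real.log (x₀ - x) - K * Real.log x₀
      ≤ Real.log (A x) - Real.log (A 0) := by
    rw [← hψx, ← hψ0, hftc]
    exact le_trans (le_of_eq hcalc.symm) hmono
  have h20 : (0:ℝ) < x₀ - x := by linarith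
  have hA0 : 0 < A 0 := hpos 0 ⟨le_refl 0, by linarith⟩ (by intro h; rw [← h] at hx₀0; linarith)
  have hAx : 0 < A x := hApos x ⟨hx0, le_refl x⟩
  have hR : 0 < A 0 / x₀ ^ K * (x₀ - x) ^ K := by positivity
  rw [← Real.log_le_log_iff hR hAx]
  rw [Real.log_mul (by positivity) (by positivity),
    Real.log_div hA0.ne' (by positivity), Real.log_rpow hx₀0, Real.log_rpow h20]
  linarith

set_option maxHeartbeats 2000000 in
theorem stmt5 (a : ℝ → ℝ) (x₀ K : ℝ) (L : NNReal)
    (hx₀ : x₀ ∈ Set.Ioo (0:ℝ) 1)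
    (hLip : LipschitzOnWith L a (Set.Icc 0 1))
    (ha0 : a x₀ = 0)
    (hpos : ∀ x ∈ Set.Icc (0:ℝ) 1, x ≠ x₀ → 0 < a x)
    (hK : K ∈ Set.Ico (1:ℝ) 2)
    (hineq : ∀ᵐ x ∂(MeasureTheory.volume.restrict (Set.Icc (0:ℝ) 1)),
      (x - x₀) * deriv a x ≤ K * a x) :
    ∃ C > 0, ∀ (v v' : ℝ → ℝ),
      (∀ x ∈ Set.Icc (0:ℝ) 1, HasDerivAt v (v' x) x) →
      v 0 = 0 → v 1 = 0 →
      MeasureTheory.IntegrableOn (fun x => (v' x) ^ 2) (Set.Ioo 0 1) →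
      MeasureTheory.IntegrableOn (fun x => (v x) ^ 2 / a x) (Set.Ioo 0 1) →
      (∫ x in Set.Ioo (0:ℝ) 1, (v x) ^ 2 / a x) ≤ C * ∫ x in Set.Ioo (0:ℝ) 1, (v' x) ^ 2 := by
  obtain ⟨hx₀0, hx₀1⟩ := hx₀
  obtain ⟨hK1, hK2⟩ := hK
  obtain ⟨A, hAl, hAe⟩ := hLip.extend_real
  have hx₀m : x₀ ∈ Icc (0:ℝ) 1 := ⟨hx₀0.le, hx₀1.le⟩
  have hpos' : ∀ y ∈ Icc (0:ℝ) 1, y ≠ x₀ → 0 < A y := fun y hy hne => by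
    rw [← hAe hy]; exact hpos y hy hne
  have hA0 : A x₀ = 0 := by rw [← hAe hx₀m]; exact ha0
  -- transfer the differential inequality to A
  have hae' : ∀ᵐ y : ℝ, y ∈ Ioo (0:ℝ) 1 → (y - x₀) * deriv A y ≤ K * A y := by
    have h2 : ∀ᵐ y : ℝ, y ∈ Icc (0:ℝ) 1 → (y - x₀) * deriv a y ≤ K * a y :=
      ae_imp_of_ae_restrict hineq
    filter_upwards [h2] with y hy hyo
    have hicc : y ∈ Icc (0:ℝ) 1 := Ioo_subset_Icc_self hyo
    have hde : deriv A y = deriv a y := by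
      apply Filter.EventuallyEq.deriv_eq
      filter_upwards [isOpen_Ioo.mem_nhds hyo] with t ht
      exact (hAe (Ioo_subset_Icc_self ht)).symm
    rw [hde, ← hAe hicc]
    exact hy hicc
  -- lower bound on A
  set c : ℝ := min (A 0 / x₀ ^ K) (A 1 / (1 - x₀) ^ K) with hcdef
  have hA0p : 0 < A 0 := hpos' 0 ⟨le_refl 0, by linarith⟩ (by intro h; rw [← h] at hx₀0; linarith)
  have hA1p : 0 < A 1 := hpos' 1 ⟨by linarith, le_refl 1⟩ (by intro h; rw [← h] at hx₀1; linarith)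
  have hc : 0 < c := lt_min (div_pos hA0p (Real.rpow_pos_of_pos hx₀0 K)) (div_pos hA1p (Real.rpow_pos_of_pos (by linarith) K))
  have hlow : ∀ y ∈ Icc (0:ℝ) 1, c * |y - x₀| ^ K ≤ A y := by
    intro y hy
    rcases lt_trichotomy y x₀ with h | h | h
    · rw [abs_of_neg (by linarith : y - x₀ < 0), neg_sub]
      calc c * (x₀ - y) ^ K ≤ (A 0 / x₀ ^ K) * (x₀ - y) ^ K :=
            mul_le_mul_of_nonneg_right (min_le_left _ _) (Real.rpow_nonneg (by linarith) K)
        _ ≤ A y := aux_left hAl hx₀0 hx₀1 hpos'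
            (by filter_upwards [hae'] with t ht hto; exact ht ⟨hto.1, by linarith [hto.2]⟩)
            hy.1 h
    · rw [h]
      simp [hA0, Real.zero_rpow (by intro hh; rw [hh] at hK1; linarith : K ≠ 0)]
    · rw [abs_of_pos (by linarith : (0:ℝ) < y - x₀)]
      calc c * (y - x₀) ^ K ≤ (A 1 / (1 - x₀) ^ K) * (y - x₀) ^ K :=
            mul_le_mul_of_nonneg_right (min_le_right _ _) (Real.rpow_nonneg (by linarith) K)
        _ = A 1 / (1 - x₀) ^ K * (y - x₀) ^ K := rfl
        _ ≤ A y := aux_right hAl hx₀0 hx₀1 hpos'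
            (by filter_upwards [hae'] with t ht hto; exact ht ⟨by linarith [hto.1], hto.2⟩)
            h hy.2
  -- integrability of the comparison weight
  have hrint : IntegrableOn (fun y : ℝ => |y - x₀| ^ (1 - K)) (Ioo (0:ℝ) 1) := by
    have hexp : (-1:ℝ) < 1 - K := by linarith
    have hri : IntegrableOn (fun y : ℝ => (y - x₀) ^ (1 - K)) (Ioc x₀ 1) := by
      have h1 : IntervalIntegrable (fun z : ℝ => z ^ (1 - K)) volume 0 (1 - x₀) :=
        intervalIntegral.intervalIntegrable_rpow' hexp
      have h2 := h1.comp_sub_right x₀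
      rw [show (0:ℝ) + x₀ = x₀ by ring, show 1 - x₀ + x₀ = 1 by ring] at h2
      exact (intervalIntegrable_iff_integrableOn_Ioc_of_le hx₀1.le).1 h2
    have hli : IntegrableOn (fun y : ℝ => (x₀ - y) ^ (1 - K)) (Ioc 0 x₀) := by
      have h1 : IntervalIntegrable (fun z : ℝ => z ^ (1 - K)) volume 0 x₀ :=
        intervalIntegral.intervalIntegrable_rpow' hexp
      have h2 := h1.comp_sub_left x₀
      rw [show x₀ - 0 = x₀ by ring, sub_self] at h2
      exact (intervalIntegrable_iff_integrableOn_Ioc_of_le hx₀0.le).1 h2.symm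
    have hl : IntegrableOn (fun y : ℝ => |y - x₀| ^ (1 - K)) (Ioc 0 x₀) := by
      refine hli.congr_fun (fun y hy => ?_) measurableSet_Ioc
      rw [abs_of_nonpos (by linarith [hy.2] : y - x₀ ≤ 0), neg_sub]
    have hr : IntegrableOn (fun y : ℝ => |y - x₀| ^ (1 - K)) (Ioc x₀ 1) := by
      refine hri.congr_fun (fun y hy => ?_) measurableSet_Ioc
      rw [abs_of_pos (by linarith [hy.1] : (0:ℝ) < y - x₀)]
    exact (hl.union hr).mono_set (fun y hy =>
      (le_or_gt y x₀).elim (fun h => Or.inl ⟨hy.1, h⟩) (fun h => Or.inr ⟨h, hy.2.le⟩))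
  set MR : ℝ := ∫ y in Ioo (0:ℝ) 1, |y - x₀| ^ (1 - K) with hMRdef
  have hMR0 : 0 ≤ MR := integral_nonneg fun y => Real.rpow_nonneg (abs_nonneg _) _
  refine ⟨(MR + 1) / c, div_pos (by linarith) hc, ?_⟩
  intro v v' hv hv0 hv1 hint1 hint2
  -- measurability and integrability of v'
  have hmeasv' : AEStronglyMeasurable v' (volume.restrict (Icc (0:ℝ) 1)) := by
    refine (measurable_deriv v).aestronglyMeasurable.restrict.congr ?_
    filter_upwards [ae_restrict_mem measurableSet_Icc] with x hx
    exact (hv x hx).deriv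
  have hint1' : IntegrableOn (fun x => v' x ^ 2) (Icc (0:ℝ) 1) := by
    rw [IntegrableOn, ← Measure.restrict_congr_set Ioo_ae_eq_Icc]
    exact hint1
  have hv'int : IntegrableOn v' (Icc (0:ℝ) 1) := by
    refine Integrable.mono' (g := fun x => (1 + v' x ^ 2) / 2) ?_ hmeasv' ?_
    · exact ((integrableOn_const (by simp [Real.volume_Icc])).add hint1').div_const 2
    · refine Eventually.of_forall fun x => ?_
      rw [Real.norm_eq_abs]
      nlinarith [sq_abs (v' x), sq_nonneg (|v' x| - 1)]
  have hsub : ∀ x ∈ Icc (0:ℝ) 1, Ι x₀ x ⊆ Icc (0:ℝ) 1 := fun x hx =>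
    subset_trans uIoc_subset_uIcc (uIcc_subset_Icc hx₀m hx)
  have hIv' : ∀ x ∈ Icc (0:ℝ) 1, IntervalIntegrable v' volume x₀ x := fun x hx => by
    rw [intervalIntegrable_iff]
    exact hv'int.mono_set (hsub x hx)
  have hftcv : ∀ x ∈ Icc (0:ℝ) 1, ∫ t in x₀..x, v' t = v x - v x₀ := fun x hx =>
    intervalIntegral.integral_eq_sub_of_hasDerivAt
      (fun t ht => hv t ((uIcc_subset_Icc hx₀m hx) ht)) (hIv' x hx)
  -- v x₀ = 0
  have hvx₀ : v x₀ = 0 := by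
    by_contra hd
    have hne : v x₀ ≠ 0 := hd
    have hcont : ContinuousAt v x₀ := (hv x₀ hx₀m).continuousAt
    have hd2 : 0 < |v x₀| / 2 := by positivity
    obtain ⟨δ, hδ0, hδ⟩ := Metric.continuousAt_iff.1 hcont (|v x₀| / 2) hd2
    set η := min δ (1 - x₀) with hηdef
    have hη0 : 0 < η := lt_min hδ0 (by linarith)
    have hηδ : η ≤ δ := min_le_left _ _
    have hη1 : η ≤ 1 - x₀ := min_le_right _ _
    have hsub2 : Ioo x₀ (x₀ + η) ⊆ Ioo (0:ℝ) 1 := fun y hy =>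
      ⟨by linarith [hy.1], by linarith [hy.2]⟩
    set Cd : ℝ := v x₀ ^ 2 / 4 / ((L:ℝ) + 1) with hCddef
    have hL1 : (0:ℝ) < (L:ℝ) + 1 := by positivity
    have hCd : 0 < Cd := by positivity
    have hb2 : ∀ᵐ y ∂(volume.restrict (Ioo x₀ (x₀ + η))),
        Cd * (y - x₀)⁻¹ ≤ v y ^ 2 / a y := by
      filter_upwards [ae_restrict_mem measurableSet_Ioo] with y hy
      have hy01 : y ∈ Ioo (0:ℝ) 1 := hsub2 hy
      have hyx : x₀ < y := hy.1
      have hax : 0 < a y := hpos y (Ioo_subset_Icc_self hy01) (ne_of_gt hyx)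
      have hay : a y ≤ ((L:ℝ) + 1) * (y - x₀) := by
        have hdd := (lipschitzOnWith_iff_dist_le_mul.1 hLip) y (Ioo_subset_Icc_self hy01) x₀ hx₀m
        rw [Real.dist_eq, Real.dist_eq, ha0, sub_zero, abs_of_pos (by linarith : (0:ℝ) < y - x₀)] at hdd
        have h1 : a y ≤ |a y| := le_abs_self _
        nlinarith [hdd, h1]
      have hvy : |v x₀| / 2 ≤ |v y| := by
        have hdy : dist y x₀ < δ := by
          rw [Real.dist_eq, abs_of_pos (by linarith : (0:ℝ) < y - x₀)]
          linarith [hy.2]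
        have := hδ hdy
        rw [Real.dist_eq] at this
        have h3 : |v x₀| - |v y| ≤ |v y - v x₀| := by
          rw [abs_sub_comm]; exact abs_sub_abs_le_abs_sub _ _
        linarith
      have hnum : v x₀ ^ 2 / 4 ≤ v y ^ 2 := by
        have hmm := mul_self_le_mul_self (by positivity) hvy
        nlinarith [sq_abs (v y), sq_abs (v x₀)]
      have he1 : Cd * (y - x₀)⁻¹ = v x₀ ^ 2 / 4 / (((L:ℝ) + 1) * (y - x₀)) := by
        rw [hCddef]
        field_simp
      rw [he1]
      exact div_le_div₀ (sq_nonneg _) hnum hax hay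
    have hgi : IntegrableOn (fun y => Cd * (y - x₀)⁻¹) (Ioo x₀ (x₀ + η)) := by
      refine Integrable.mono' (hint2.mono_set hsub2) ?_ ?_
      · refine ContinuousOn.aestronglyMeasurable ?_ measurableSet_Ioo
        refine continuousOn_const.mul (ContinuousOn.inv₀
          ((continuous_id.sub continuous_const).continuousOn) ?_)
        intro y hy
        have h5 : x₀ < y := hy.1
        exact (sub_pos.2 h5).ne'
      · filter_upwards [hb2, ae_restrict_mem measurableSet_Ioo] with y hy hym
        rw [Real.norm_eq_abs, abs_of_nonneg
          (mul_nonneg hCd.le (inv_nonneg.2 (by linarith [hym.1])))]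
        exact hy
    have hinv : IntegrableOn (fun y : ℝ => (y - x₀)⁻¹) (Ioo x₀ (x₀ + η)) := by
      have h2 := hgi.const_mul Cd⁻¹
      simp only [← mul_assoc, inv_mul_cancel₀ hCd.ne', one_mul] at h2
      exact h2
    have hI : IntervalIntegrable (fun y : ℝ => (y - x₀)⁻¹) volume x₀ (x₀ + η) :=
      (intervalIntegrable_iff_integrableOn_Ioo_of_le (by linarith)).2 hinv
    have hI2 := hI.comp_sub_right (-x₀)
    rw [show x₀ + -x₀ = (0:ℝ) by ring, show x₀ + η + -x₀ = η by ring] at hI2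
    have hI3 : IntegrableOn (fun x : ℝ => x⁻¹) (Ioo 0 η) := by
      have h6 := (intervalIntegrable_iff_integrableOn_Ioo_of_le hη0.le).1 hI2
      refine h6.congr_fun (fun x hx => ?_) measurableSet_Ioo
      norm_num
    have hI4 : IntegrableOn (fun x : ℝ => x ^ (-1:ℝ)) (Ioo 0 η) := by
      refine hI3.congr_fun (fun x hx => ?_) measurableSet_Ioo
      rw [show (-1:ℝ) = ((-1:ℤ):ℝ) by norm_num, Real.rpow_intCast, zpow_neg_one]
    rw [intervalIntegral.integrableOn_Ioo_rpow_iff hη0] at hI4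
    linarith
  -- pointwise square bound on v
  set D : ℝ := ∫ y in Ioo (0:ℝ) 1, v' y ^ 2 with hDdef
  have hD0 : 0 ≤ D := integral_nonneg fun y => sq_nonneg _
  have hpt : ∀ x ∈ Icc (0:ℝ) 1, v x ^ 2 ≤ D * |x - x₀| := by
    intro x hx
    have hvx' : v x = ∫ t in x₀..x, v' t := by
      have h := hftcv x hx; rw [hvx₀] at h; linarith
    set s : Set ℝ := Ι x₀ x with hsdef
    have hss : s ⊆ Icc (0:ℝ) 1 := hsub x hx
    haveI hfinm : IsFiniteMeasure (volume.restrict s) := by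
      constructor
      rw [Measure.restrict_apply_univ]
      calc volume s ≤ volume (Icc (0:ℝ) 1) := measure_mono hss
        _ < ⊤ := by simp [Real.volume_Icc]
    have hmeas_s : AEStronglyMeasurable v' (volume.restrict s) :=
      hmeasv'.mono_measure (Measure.restrict_mono hss le_rfl)
    have habs : AEStronglyMeasurable (fun y => |v' y|) (volume.restrict s) := by
      have := hmeas_s.norm
      simpa [Real.norm_eq_abs] using this
    have hsqint : Integrable (fun y => |v' y| ^ 2) (volume.restrict s) := by
      have h1 : IntegrableOn (fun y => v' y ^ 2) s := hint1'.mono_set hss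
      exact h1.congr_fun (fun y hy => (sq_abs (v' y)).symm) measurableSet_uIoc
    have hconj : (2:ℝ).HolderConjugate 2 := (Real.holderConjugate_iff).2 ⟨one_lt_two, by norm_num⟩
    have hof2 : ENNReal.ofReal (2:ℝ) = 2 := by norm_num
    have hf2 : MemLp (fun y => |v' y|) (ENNReal.ofReal 2) (volume.restrict s) := by
      rw [hof2]
      exact (memLp_two_iff_integrable_sq habs).2 hsqint
    have hg2 : MemLp (fun _ : ℝ => (1:ℝ)) (ENNReal.ofReal 2) (volume.restrict s) := by
      rw [hof2]; exact memLp_const 1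
    have hH := integral_mul_le_Lp_mul_Lq_of_nonneg hconj
      (Eventually.of_forall fun y => abs_nonneg (v' y))
      (Eventually.of_forall fun _ => zero_le_one) hf2 hg2
    simp only [mul_one, Real.one_rpow] at hH
    have hI2' : (∫ y in s, |v' y| ^ (2:ℝ)) = ∫ y in s, v' y ^ 2 := by
      refine integral_congr_ae (Eventually.of_forall fun y => ?_)
      show |v' y| ^ (2:ℝ) = v' y ^ 2
      have hcast : |v' y| ^ (2:ℝ) = |v' y| ^ (2:ℕ) := by
        rw [← Real.rpow_natCast (|v' y|) 2]
        norm_num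
      rw [hcast, sq_abs]
    have hone : (∫ _ in s, (1:ℝ)) = |x - x₀| := by
      rw [setIntegral_const, smul_eq_mul, mul_one, measureReal_def]
      have hvs : volume s = ENNReal.ofReal |x - x₀| := by
        have hrfl : s = Ioc (min x₀ x) (max x₀ x) := rfl
        rw [hrfl, Real.volume_Ioc, max_sub_min_eq_abs, abs_sub_comm]
      rw [hvs, ENNReal.toReal_ofReal (abs_nonneg _)]
    have hIleD : (∫ y in s, v' y ^ 2) ≤ D := by
      rw [hDdef, show volume.restrict (Ioo (0:ℝ) 1) = volume.restrict (Icc (0:ℝ) 1) from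
        Measure.restrict_congr_set Ioo_ae_eq_Icc]
      exact setIntegral_mono_set hint1' (Eventually.of_forall fun y => sq_nonneg _)
        (HasSubset.Subset.eventuallyLE hss)
    have habs_le : |v x| ≤ D ^ (1/2:ℝ) * |x - x₀| ^ (1/2:ℝ) := by
      rw [hvx']
      calc |∫ t in x₀..x, v' t| ≤ ∫ y in Ι x₀ x, |v' y| := by
            have h7 := intervalIntegral.norm_integral_le_integral_norm_uIoc
              (a := x₀) (b := x) (f := v') (μ := volume)
            simpa [Real.norm_eq_abs] using h7
        _ ≤ (∫ y in s, |v' y| ^ (2:ℝ)) ^ (1/2:ℝ) * (∫ _ in s, (1:ℝ)) ^ (1/2:ℝ) := hH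
        _ = (∫ y in s, v' y ^ 2) ^ (1/2:ℝ) * |x - x₀| ^ (1/2:ℝ) := by rw [hI2', hone]
        _ ≤ D ^ (1/2:ℝ) * |x - x₀| ^ (1/2:ℝ) :=
            mul_le_mul_of_nonneg_right
              (Real.rpow_le_rpow (integral_nonneg fun y => sq_nonneg _) hIleD (by norm_num))
              (Real.rpow_nonneg (abs_nonneg _) _)
    have h2 : v x ^ 2 ≤ (D ^ (1/2:ℝ) * |x - x₀| ^ (1/2:ℝ)) ^ 2 := by
      rw [← sq_abs (v x)]
      exact pow_le_pow_left₀ (abs_nonneg _) habs_le 2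
    have h3 : (D ^ (1/2:ℝ) * |x - x₀| ^ (1/2:ℝ)) ^ 2 = D * |x - x₀| := by
      rw [mul_pow, ← Real.rpow_natCast (D ^ (1/2:ℝ)) 2, ← Real.rpow_natCast (|x - x₀| ^ (1/2:ℝ)) 2,
        ← Real.rpow_mul hD0, ← Real.rpow_mul (abs_nonneg _)]
      norm_num
    rw [h3] at h2
    exact h2
  -- final comparison
  have hane : ∀ᵐ y : ℝ, y ≠ x₀ := by
    have h8 : {y : ℝ | ¬ y ≠ x₀} = {x₀} := by ext t; simp
    rw [ae_iff, h8]; exact measure_singleton x₀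
  have hfb : ∀ᵐ y ∂(volume.restrict (Ioo (0:ℝ) 1)),
      v y ^ 2 / a y ≤ (D / c) * |y - x₀| ^ (1 - K) := by
    filter_upwards [ae_restrict_mem measurableSet_Ioo, ae_restrict_of_ae hane] with y hy hne
    have hyIcc : y ∈ Icc (0:ℝ) 1 := Ioo_subset_Icc_self hy
    have ht0 : 0 < |y - x₀| := abs_pos.2 (sub_ne_zero.2 hne)
    have hlow' := hlow y hyIcc
    have hden : 0 < c * |y - x₀| ^ K := mul_pos hc (Real.rpow_pos_of_pos ht0 K)
    have hstep : v y ^ 2 / a y ≤ (D * |y - x₀|) / (c * |y - x₀| ^ K) := by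
      rw [hAe hyIcc]
      exact div_le_div₀ (mul_nonneg hD0 (abs_nonneg _)) (hpt y hyIcc) hden hlow'
    have hR : (D * |y - x₀|) / (c * |y - x₀| ^ K) = (D / c) * |y - x₀| ^ (1 - K) := by
      rw [Real.rpow_sub ht0, Real.rpow_one, div_mul_div_comm]
    rw [hR] at hstep
    exact hstep
  have hfinal : (∫ y in Ioo (0:ℝ) 1, v y ^ 2 / a y) ≤ (D / c) * MR := by
    have h1 := integral_mono_ae hint2 (hrint.const_mul (D / c)) hfb
    rwa [integral_const_mul] at h1
  calc (∫ y in Ioo (0:ℝ) 1, v y ^ 2 / a y) ≤ (D / c) * MR := hfinal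
    _ ≤ (MR + 1) / c * D := by
        have h2 : D / c * MR ≤ D / c * (MR + 1) :=
          mul_le_mul_of_nonneg_left (by linarith) (div_nonneg hD0 hc.le)
        calc D / c * MR ≤ D / c * (MR + 1) := h2
          _ = (MR + 1) / c * D := by ring
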